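/- Fix integers a ≥ 1 and b ≥ 1. Then R_n^{(a,b,0,0)}(x) = n! for all n ≤ a+b, and for every s ≥ 1, R_{a+b+s}^{(a,b,0,0)}(x) = (a+b)! · Π_{i=1}^{s} ((a+b) + i·x). -/

import Mathlib

/-- Number of points in quadrant I relative to `(i, σ i)`. -/
def quad1 {n : ℕ} (σ : Equiv.Perm (Fin n)) (i : Fin n) : ℕ :=
  (Finset.univ.filter (fun j => i < j ∧ σ i < σ j)).card

/-- Number of points in quadrant II relative to `(i, σ i)`. -/
def quad2 {n : ℕ} (σ : Equiv.Perm (Fin n)) (i : Fin n) : ℕ :=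
  (Finset.univ.filter (fun j => j < i ∧ σ i < σ j)).card

/-- `mmp^{(a,b,0,0)}(σ)`: the number of indices `i` with at least `a` points
in quadrant I and at least `b` points in quadrant II relative to `(i, σ i)`. -/
def mmpAB {n : ℕ} (a b : ℕ) (σ : Equiv.Perm (Fin n)) : ℕ :=
  (Finset.univ.filter (fun i => a ≤ quad1 σ i ∧ b ≤ quad2 σ i)).card

/-- `R_n^{(a,b,0,0)}(x) = Σ_{σ ∈ S_n} x^{mmp^{(a,b,0,0)}(σ)}`. -/
noncomputable def R (a b n : ℕ) : Polynomial ℤ :=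
  ∑ σ : Equiv.Perm (Fin n), Polynomial.X ^ mmpAB a b σ

open Finset Polynomial Equiv

/-- Insert value 0 at position p, shifting pattern τ. -/
def ins {n : ℕ} (p : Fin (n+1)) (τ : Equiv.Perm (Fin n)) : Equiv.Perm (Fin (n+1)) :=
  (finSuccEquiv' p).trans ((τ.optionCongr).trans (finSuccEquiv' 0).symm)

lemma ins_self {n : ℕ} (p : Fin (n+1)) (τ : Equiv.Perm (Fin n)) : ins p τ p = 0 := by
  simp [ins]

lemma ins_succAbove {n : ℕ} (p : Fin (n+1)) (τ : Equiv.Perm (Fin n)) (i : Fin n) :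
    ins p τ (p.succAbove i) = (τ i).succ := by
  simp [ins, Fin.zero_succAbove]

lemma quad1_ins {n : ℕ} (p : Fin (n+1)) (τ : Equiv.Perm (Fin n)) (i : Fin n) :
    quad1 (ins p τ) (p.succAbove i) = quad1 τ i := by
  unfold quad1
  have hset : (Finset.univ.filter fun j => p.succAbove i < j ∧ ins p τ (p.succAbove i) < ins p τ j)
      = (Finset.univ.filter fun k => i < k ∧ τ i < τ k).map (Fin.succAboveEmb p) := by
    ext j
    simp only [Finset.mem_map, Finset.mem_filter, Finset.mem_univ, true_and,
      Fin.succAboveEmb_apply]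
    constructor
    · rintro ⟨h1, h2⟩
      have hjp : j ≠ p := by
        rintro rfl
        rw [ins_self] at h2
        exact absurd h2 (Fin.not_lt_zero _)
      obtain ⟨k, rfl⟩ := Fin.exists_succAbove_eq hjp
      rw [ins_succAbove, ins_succAbove, Fin.succ_lt_succ_iff] at h2
      exact ⟨k, ⟨Fin.succAbove_lt_succAbove_iff.mp h1, h2⟩, rfl⟩
    · rintro ⟨k, ⟨h1, h2⟩, rfl⟩
      rw [ins_succAbove, ins_succAbove, Fin.succ_lt_succ_iff]
      exact ⟨Fin.succAbove_lt_succAbove_iff.mpr h1, h2⟩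
  rw [hset, Finset.card_map]

lemma quad2_ins {n : ℕ} (p : Fin (n+1)) (τ : Equiv.Perm (Fin n)) (i : Fin n) :
    quad2 (ins p τ) (p.succAbove i) = quad2 τ i := by
  unfold quad2
  have hset : (Finset.univ.filter fun j => j < p.succAbove i ∧ ins p τ (p.succAbove i) < ins p τ j)
      = (Finset.univ.filter fun k => k < i ∧ τ i < τ k).map (Fin.succAboveEmb p) := by
    ext j
    simp only [Finset.mem_map, Finset.mem_filter, Finset.mem_univ, true_and,
      Fin.succAboveEmb_apply]
    constructor
    · rintro ⟨h1, h2⟩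
      have hjp : j ≠ p := by
        rintro rfl
        rw [ins_self] at h2
        exact absurd h2 (Fin.not_lt_zero _)
      obtain ⟨k, rfl⟩ := Fin.exists_succAbove_eq hjp
      rw [ins_succAbove, ins_succAbove, Fin.succ_lt_succ_iff] at h2
      exact ⟨k, ⟨Fin.succAbove_lt_succAbove_iff.mp h1, h2⟩, rfl⟩
    · rintro ⟨k, ⟨h1, h2⟩, rfl⟩
      rw [ins_succAbove, ins_succAbove, Fin.succ_lt_succ_iff]
      exact ⟨Fin.succAbove_lt_succAbove_iff.mpr h1, h2⟩
  rw [hset, Finset.card_map]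

lemma quad1_ins_self {n : ℕ} (p : Fin (n+1)) (τ : Equiv.Perm (Fin n)) :
    quad1 (ins p τ) p = n - p := by
  unfold quad1
  have hset : (Finset.univ.filter fun j => p < j ∧ ins p τ p < ins p τ j) = Finset.Ioi p := by
    ext j
    simp only [Finset.mem_filter, Finset.mem_univ, true_and, Finset.mem_Ioi, ins_self]
    constructor
    · exact fun h => h.1
    · intro hj
      refine ⟨hj, Fin.pos_of_ne_zero ?_⟩
      rw [← ins_self p τ]
      exact fun h => absurd ((ins p τ).injective h) (ne_of_gt hj)
  rw [hset, Fin.card_Ioi]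
  omega

lemma quad2_ins_self {n : ℕ} (p : Fin (n+1)) (τ : Equiv.Perm (Fin n)) :
    quad2 (ins p τ) p = p := by
  unfold quad2
  have hset : (Finset.univ.filter fun j => j < p ∧ ins p τ p < ins p τ j) = Finset.Iio p := by
    ext j
    simp only [Finset.mem_filter, Finset.mem_univ, true_and, Finset.mem_Iio, ins_self]
    constructor
    · exact fun h => h.1
    · intro hj
      refine ⟨hj, Fin.pos_of_ne_zero ?_⟩
      rw [← ins_self p τ]
      exact fun h => absurd ((ins p τ).injective h) (ne_of_lt hj)
  rw [hset, Fin.card_Iio]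

lemma mmp_ins {n : ℕ} (a b : ℕ) (p : Fin (n+1)) (τ : Equiv.Perm (Fin n)) :
    mmpAB a b (ins p τ) = mmpAB a b τ + (if b ≤ (p : ℕ) ∧ a ≤ n - (p : ℕ) then 1 else 0) := by
  unfold mmpAB
  have hset : (Finset.univ.filter fun i => a ≤ quad1 (ins p τ) i ∧ b ≤ quad2 (ins p τ) i)
      = ((Finset.univ.filter fun i => a ≤ quad1 τ i ∧ b ≤ quad2 τ i).map (Fin.succAboveEmb p))
        ∪ (if b ≤ (p : ℕ) ∧ a ≤ n - (p : ℕ) then {p} else ∅) := by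
    ext j
    simp only [Finset.mem_union, Finset.mem_map, Finset.mem_filter, Finset.mem_univ, true_and,
      Fin.succAboveEmb_apply]
    rcases eq_or_ne j p with rfl | hjp
    · simp only [quad1_ins_self, quad2_ins_self]
      constructor
      · intro h
        right
        rw [if_pos ⟨h.2, h.1⟩]
        exact Finset.mem_singleton_self j
      · intro h
        rcases h with ⟨k, _, hk⟩ | h
        · exact absurd hk (Fin.succAbove_ne j k)
        · split at h
          · rename_i hc
            exact ⟨hc.2, hc.1⟩
          · exact absurd h (Finset.notMem_empty j)
    · obtain ⟨k, rfl⟩ := Fin.exists_succAbove_eq hjp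
      simp only [quad1_ins, quad2_ins]
      constructor
      · intro h
        exact Or.inl ⟨k, h, rfl⟩
      · intro h
        rcases h with ⟨k', hk', hkk⟩ | h
        · rwa [← (Fin.succAbove_right_injective (p := p)) hkk]
        · exfalso
          split at h
          · exact hjp (Finset.mem_singleton.mp h)
          · exact Finset.notMem_empty _ h
  rw [hset, Finset.card_union_of_disjoint, Finset.card_map]
  · congr 1
    split
    · rfl
    · rfl
  · split
    · rw [Finset.disjoint_singleton_right]
      simp only [Finset.mem_map, Fin.succAboveEmb_apply]
      rintro ⟨k, _, hk⟩
      exact Fin.succAbove_ne p k hk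
    · exact Finset.disjoint_empty_right _

lemma ins_bijective (n : ℕ) :
    Function.Bijective (fun pτ : Fin (n+1) × Equiv.Perm (Fin n) => ins pτ.1 pτ.2) := by
  rw [Fintype.bijective_iff_injective_and_card]
  constructor
  · rintro ⟨p, τ⟩ ⟨p', τ'⟩ h
    simp only at h
    have hp : p = p' := by
      have h1 : ins p' τ' p = 0 := by rw [← h, ins_self]
      have h2 : ins p' τ' p = ins p' τ' p' := by rw [h1, ins_self]
      exact (ins p' τ').injective h2
    subst hp
    have hτ : τ = τ' := by
      apply Equiv.ext
      intro i
      have h2 := congrArg (fun σ : Equiv.Perm (Fin (n+1)) => σ (p.succAbove i)) h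
      simp only [ins_succAbove] at h2
      exact Fin.succ_injective _ h2
    rw [hτ]
  · simp [Fintype.card_perm, Nat.factorial_succ]

lemma card_cond (a b n : ℕ) :
    (Finset.univ.filter fun p : Fin (n+1) => b ≤ (p : ℕ) ∧ a ≤ n - (p : ℕ)).card
      = n + 1 - (a + b) := by
  rw [Finset.card_filter]
  rw [Fin.sum_univ_eq_sum_range (fun m => if b ≤ m ∧ a ≤ n - m then 1 else 0)]
  rw [← Finset.card_filter]
  by_cases han : a ≤ n
  · have hset : (Finset.range (n+1)).filter (fun m => b ≤ m ∧ a ≤ n - m)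
        = Finset.Icc b (n - a) := by
      ext m
      simp only [Finset.mem_filter, Finset.mem_range, Finset.mem_Icc]
      omega
    rw [hset, Nat.card_Icc]
    omega
  · have hset : (Finset.range (n+1)).filter (fun m => b ≤ m ∧ a ≤ n - m) = ∅ := by
      ext m
      simp only [Finset.mem_filter, Finset.mem_range, Finset.notMem_empty, iff_false]
      omega
    rw [hset, Finset.card_empty]
    omega

lemma R_succ (a b n : ℕ) :
    R a b (n+1) = R a b n *
      (((n + 1 - (n + 1 - (a + b)) : ℕ) : Polynomial ℤ)
        + ((n + 1 - (a + b) : ℕ) : Polynomial ℤ) * Polynomial.X) := by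
  unfold R
  rw [← Fintype.sum_bijective _ (ins_bijective n)
    (fun pτ : Fin (n+1) × Equiv.Perm (Fin n) => (Polynomial.X : Polynomial ℤ) ^ mmpAB a b (ins pτ.1 pτ.2))
    (fun σ => (Polynomial.X : Polynomial ℤ) ^ mmpAB a b σ) (fun _ => rfl)]
  rw [Fintype.sum_prod_type]
  have hterm : ∀ p : Fin (n+1), ∀ τ : Equiv.Perm (Fin n),
      (Polynomial.X : Polynomial ℤ) ^ mmpAB a b (ins p τ)
        = Polynomial.X ^ mmpAB a b τ *
          (if b ≤ (p : ℕ) ∧ a ≤ n - (p : ℕ) then Polynomial.X else 1) := by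
    intro p τ
    rw [mmp_ins, pow_add]
    split <;> simp
  simp_rw [hterm]
  rw [Finset.sum_comm]
  simp_rw [← Finset.mul_sum]
  rw [← Finset.sum_mul]
  congr 1
  rw [Finset.sum_ite (f := fun _ => (Polynomial.X : Polynomial ℤ)) (g := fun _ => 1)]
  rw [Finset.sum_const, Finset.sum_const, card_cond]
  have hneg : (Finset.univ.filter fun p : Fin (n+1) =>
      ¬(b ≤ (p : ℕ) ∧ a ≤ n - (p : ℕ))).card = n + 1 - (n + 1 - (a + b)) := by
    have h2 := Finset.card_filter_add_card_filter_not
      (s := (Finset.univ : Finset (Fin (n+1))))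
      (p := fun p : Fin (n+1) => b ≤ (p : ℕ) ∧ a ≤ n - (p : ℕ))
    rw [card_cond] at h2
    simp only [Finset.card_univ, Fintype.card_fin] at h2
    omega
  rw [hneg]
  rw [nsmul_eq_mul, nsmul_eq_mul, mul_one, add_comm]

theorem stmt_4 (a b : ℕ) (ha : 1 ≤ a) (hb : 1 ≤ b) :
    (∀ n, n ≤ a + b → R a b n = (Nat.factorial n : Polynomial ℤ)) ∧
    (∀ s, 1 ≤ s → R a b (a + b + s) =
      (Nat.factorial (a + b) : Polynomial ℤ) *
        ∏ i ∈ Finset.Icc 1 s,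
          (((a + b : ℕ) : Polynomial ℤ) + (i : Polynomial ℤ) * Polynomial.X)) := by
  have part1 : ∀ n, n ≤ a + b → R a b n = (Nat.factorial n : Polynomial ℤ) := by
    intro n
    induction n with
    | zero => intro _; simp [R, mmpAB]
    | succ n ih =>
      intro hn
      rw [R_succ, ih (by omega)]
      have h1 : n + 1 - (a + b) = 0 := by omega
      have h2 : n + 1 - 0 = n + 1 := by omega
      rw [h1, h2, Nat.factorial_succ]
      push_cast
      ring
  refine ⟨part1, ?_⟩
  have part2 : ∀ s, R a b (a + b + s) = (Nat.factorial (a + b) : Polynomial ℤ) *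
      ∏ i ∈ Finset.Icc 1 s,
        (((a + b : ℕ) : Polynomial ℤ) + (i : Polynomial ℤ) * Polynomial.X) := by
    intro s
    induction s with
    | zero => simp [part1 (a + b) le_rfl]
    | succ s ih =>
      have hn : a + b + (s + 1) = (a + b + s) + 1 := by omega
      rw [hn, R_succ, ih]
      have h1 : a + b + s + 1 - (a + b) = s + 1 := by omega
      have h2 : a + b + s + 1 - (s + 1) = a + b := by omega
      rw [h1, h2]
      rw [Finset.prod_Icc_succ_top (by omega : 1 ≤ s + 1)]
      push_cast
      ring
  exact fun s _ => part2 s
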